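/- Let f : ℝ^d → ℝ be L-smooth and twice continuously differentiable, γ ≤ 1/(2L), and let g^T denote T-fold composition of g(x) = x - γ∇f(x). Then for any measurable Y ⊆ ℝ^d, ℒ((g^T)^{-1}(Y)) ≤ 2^{Td} · ℒ(Y). -/

import Mathlib

open MeasureTheory Set
open scoped ENNReal NNReal

-- Hausdorff measure on Euclidean space is a nonzero multiple of volume
lemma euclidean_hausdorff_eq_smul_volume (d : ℕ) :
    ∃ c : ℝ≥0, c ≠ 0 ∧
      (μH[(d : ℝ)] : Measure (EuclideanSpace ℝ (Fin d))) = c • (volume : Measure (EuclideanSpace ℝ (Fin d))) := by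
  set E := EuclideanSpace ℝ (Fin d)
  set e : E ≃ (Fin d → ℝ) := WithLp.equiv 2 (Fin d → ℝ)
  have hpi : (μH[(d : ℝ)] : Measure (Fin d → ℝ)) = volume := by
    have := hausdorffMeasure_pi_real (ι := Fin d)
    simpa using this
  have hd0 : (0:ℝ) ≤ (d:ℝ) := by positivity
  have hlipe : LipschitzWith 1 e := PiLp.lipschitzWith_ofLp 2 _
  have halip : AntilipschitzWith _ e := PiLp.antilipschitzWith_ofLp 2 _
  -- finiteness on compacts
  haveI : IsFiniteMeasureOnCompacts (μH[(d : ℝ)] : Measure E) := by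
    constructor
    intro K hK
    have h1 := halip.le_hausdorffMeasure_image hd0 K
    have h2 : μH[(d : ℝ)] (e '' K) < ∞ := by
      rw [hpi]
      exact ((hK.image (PiLp.continuous_ofLp 2 _)).measure_lt_top)
    calc μH[(d : ℝ)] K ≤ _ * μH[(d : ℝ)] (e '' K) := h1
      _ < ∞ := ENNReal.mul_lt_top (ENNReal.rpow_lt_top_of_nonneg hd0 ENNReal.coe_ne_top) h2
  have heq := Measure.isAddLeftInvariant_eq_smul (μH[(d : ℝ)] : Measure E) volume
  refine ⟨_, ?_, heq⟩
  -- nonzero: Hausdorff measure of the unit ball is positive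
  intro hc0
  have hball : (0:ℝ≥0∞) < μH[(d : ℝ)] (Metric.ball (0:E) 1) := by
    have h1 := hlipe.hausdorffMeasure_image_le hd0 (Metric.ball (0:E) 1)
    have h2 : (0:ℝ≥0∞) < μH[(d : ℝ)] (e '' Metric.ball (0:E) 1) := by
      rw [hpi]
      have : IsOpen (e '' Metric.ball (0:E) 1) := by
        have : e '' Metric.ball (0:E) 1 = (Homeomorph.mk e (PiLp.continuous_ofLp 2 _) (PiLp.continuous_toLp 2 _)) '' Metric.ball (0:E) 1 := rfl
        rw [this]
        exact (Homeomorph.isOpenMap _) _ Metric.isOpen_ball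
      exact this.measure_pos volume ((Metric.nonempty_ball.2 one_pos).image e)
    calc (0:ℝ≥0∞) < μH[(d : ℝ)] (e '' Metric.ball (0:E) 1) := h2
      _ ≤ _ * μH[(d : ℝ)] (Metric.ball (0:E) 1) := h1
      _ = μH[(d : ℝ)] (Metric.ball (0:E) 1) := by simp
  rw [heq, hc0] at hball
  simp at hball

-- single step bound
lemma step_bound {d : ℕ} {g : EuclideanSpace ℝ (Fin d) → EuclideanSpace ℝ (Fin d)}
    (hg : AntilipschitzWith 2 g) (Y : Set (EuclideanSpace ℝ (Fin d))) :
    volume (g ⁻¹' Y) ≤ (2 : ℝ≥0∞) ^ d * volume Y := by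
  obtain ⟨c, hc0, hc⟩ := euclidean_hausdorff_eq_smul_volume d
  have h := hg.hausdorffMeasure_preimage_le (by positivity : (0:ℝ) ≤ (d:ℝ)) Y
  rw [hc] at h
  have hpow : ((2:ℝ≥0) : ℝ≥0∞) ^ (d:ℝ) = (2:ℝ≥0∞) ^ d := by
    rw [ENNReal.rpow_natCast]; norm_num
  simp only [Measure.smul_apply, ENNReal.smul_def, smul_eq_mul, hpow] at h
  have hcne : (c : ℝ≥0∞) ≠ 0 := by exact_mod_cast hc0
  have hctop : (c : ℝ≥0∞) ≠ ∞ := ENNReal.coe_ne_top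
  calc volume (g ⁻¹' Y) = (c:ℝ≥0∞)⁻¹ * ((c:ℝ≥0∞) * volume (g ⁻¹' Y)) := by
        rw [← mul_assoc, ENNReal.inv_mul_cancel hcne hctop, one_mul]
    _ ≤ (c:ℝ≥0∞)⁻¹ * ((2:ℝ≥0∞) ^ d * ((c:ℝ≥0∞) * volume Y)) := by
        gcongr
    _ = (2:ℝ≥0∞) ^ d * volume Y := by
        rw [mul_comm ((2:ℝ≥0∞)^d) ((c:ℝ≥0∞) * volume Y), ← mul_assoc, ← mul_assoc, ENNReal.inv_mul_cancel hcne hctop, one_mul, mul_comm]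

theorem stmt2 {d : ℕ} (L γ : ℝ) (hL : 0 < L) (hγ : 0 < γ) (hγL : γ ≤ 1 / (2 * L))
    (f : EuclideanSpace ℝ (Fin d) → ℝ)
    (f' : EuclideanSpace ℝ (Fin d) → EuclideanSpace ℝ (Fin d))
    (hf : ContDiff ℝ 2 f)
    (hgrad : ∀ x, HasGradientAt f (f' x) x)
    (hlip : LipschitzWith (Real.toNNReal L) f')
    (T : ℕ)
    (Y : Set (EuclideanSpace ℝ (Fin d))) (hY : MeasurableSet Y) :
    volume ((fun x => x - γ • f' x)^[T] ⁻¹' Y) ≤ (2 : ℝ≥0∞) ^ (T * d) * volume Y := by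
  set g : EuclideanSpace ℝ (Fin d) → EuclideanSpace ℝ (Fin d) := fun x => x - γ • f' x with hgdef
  have hγL2 : γ * L ≤ 1 / 2 := by
    have h2L : (0:ℝ) < 2 * L := by positivity
    have := (le_div_iff₀ h2L).1 hγL
    nlinarith
  -- g is antilipschitz with constant 2
  have hanti : AntilipschitzWith 2 g := by
    apply AntilipschitzWith.of_le_mul_dist
    intro x y
    have hfd : dist (f' x) (f' y) ≤ L * dist x y := by
      have := hlip.dist_le_mul x y
      rwa [Real.coe_toNNReal _ hL.le] at this
    have h1 : dist (g x) (g y) ≥ dist x y - γ * dist (f' x) (f' y) := by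
      have : dist (g x) (g y) = ‖(x - y) - γ • (f' x - f' y)‖ := by
        rw [dist_eq_norm]
        congr 1
        simp only [hgdef, smul_sub]
        abel
      rw [this]
      have h2 : ‖(x-y) - γ • (f' x - f' y)‖ ≥ ‖x - y‖ - ‖γ • (f' x - f' y)‖ :=
        norm_sub_norm_le _ _
      have h3 : ‖γ • (f' x - f' y)‖ = γ * dist (f' x) (f' y) := by
        rw [norm_smul, Real.norm_eq_abs, abs_of_pos hγ, dist_eq_norm]
      rw [dist_eq_norm]
      linarith
    have h4 : γ * dist (f' x) (f' y) ≤ (1/2) * dist x y := by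
      have := mul_le_mul_of_nonneg_left hfd hγ.le
      have hd : γ * L * dist x y ≤ (1/2) * dist x y := by
        apply mul_le_mul_of_nonneg_right hγL2 dist_nonneg
      nlinarith [dist_nonneg (x := x) (y := y)]
    have : dist x y ≤ 2 * dist (g x) (g y) := by linarith
    simpa using this
  clear hY
  induction T generalizing Y with
  | zero => simp
  | succ n ih =>
    rw [Function.iterate_succ', Function.comp_def]
    have : (fun x => g (g^[n] x)) ⁻¹' Y = g^[n] ⁻¹' (g ⁻¹' Y) := rfl
    rw [this]
    calc volume (g^[n] ⁻¹' (g ⁻¹' Y)) ≤ (2:ℝ≥0∞) ^ (n*d) * volume (g ⁻¹' Y) := ih _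
      _ ≤ (2:ℝ≥0∞) ^ (n*d) * ((2:ℝ≥0∞)^d * volume Y) := by gcongr; exact step_bound hanti Y
      _ = (2:ℝ≥0∞) ^ ((n+1)*d) * volume Y := by rw [← mul_assoc, ← pow_add]; ring_nf
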